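/- arXiv:2312.16641 — 3 statements merged into one kernel-verified Lean document; each statement's English description precedes it below -/
import Mathlib

section
/- Let d ≥ 1, let p > 2 and R > 0 be real numbers, set q = min(p−2, 1) and c_p = 1 if p ≤ 3 and c_p = (p−2) R^(p−3) if p > 3. Then for all vectors v, w, a, b ∈ ℝ^d (with the Euclidean norm) satisfying ‖w − v‖ ≤ R and ‖b − a‖ ≤ R, one has |‖w − v‖^(p−2) − ‖b − a‖^(p−2)| ≤ c_p ( ‖v − a‖^q + ‖w − b‖^q ). -/
open Real

private lemma rpow_subadd {s x y : ℝ} (hs0 : 0 ≤ s) (hs1 : s ≤ 1) (hx : 0 ≤ x) (hy : 0 ≤ y) :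
    (x + y) ^ s ≤ x ^ s + y ^ s := by
  lift x to NNReal using hx
  lift y to NNReal using hy
  have h := NNReal.rpow_add_le_add_rpow x y hs0 hs1
  exact_mod_cast h

private lemma abs_rpow_sub_rpow {s x y : ℝ} (hs0 : 0 ≤ s) (hs1 : s ≤ 1)
    (hx : 0 ≤ x) (hy : 0 ≤ y) : |x ^ s - y ^ s| ≤ |x - y| ^ s := by
  have key : ∀ a b : ℝ, 0 ≤ b → b ≤ a → a ^ s - b ^ s ≤ (a - b) ^ s := by
    intro a b hb hba
    have h : a ^ s ≤ (a - b) ^ s + b ^ s := by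
      have := rpow_subadd hs0 hs1 (sub_nonneg.2 hba) hb
      simpa [sub_add_cancel] using this
    linarith
  rcases le_total y x with h | h
  · rw [abs_of_nonneg (sub_nonneg.2 (Real.rpow_le_rpow hy h hs0)),
      abs_of_nonneg (sub_nonneg.2 h)]
    exact key x y hy h
  · rw [abs_of_nonpos (sub_nonpos.2 (Real.rpow_le_rpow hx h hs0)),
      abs_of_nonpos (sub_nonpos.2 h), neg_sub, neg_sub]
    exact key y x hx h

private lemma rpow_sub_rpow_mvt {s R x y : ℝ} (hs : 1 < s) (hR : 0 < R)
    (hx0 : 0 ≤ x) (hxR : x ≤ R) (hy0 : 0 ≤ y) (hyR : y ≤ R) :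
    |x ^ s - y ^ s| ≤ s * R ^ (s - 1) * |x - y| := by
  have key : ∀ a b : ℝ, 0 ≤ b → b ≤ a → a ≤ R → a ^ s - b ^ s ≤ s * R ^ (s - 1) * (a - b) := by
    intro a b hb hba haR
    have hderiv : ∀ t ∈ Set.Icc b a,
        HasDerivWithinAt (fun u : ℝ => u ^ s) (s * t ^ (s - 1)) (Set.Icc b a) t := by
      intro t ht
      exact (Real.hasDerivAt_rpow_const (Or.inr hs.le)).hasDerivWithinAt
    have hbound : ∀ t ∈ Set.Ico b a, ‖s * t ^ (s - 1)‖ ≤ s * R ^ (s - 1) := by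
      intro t ht
      have ht0 : 0 ≤ t := hb.trans ht.1
      have htR : t ≤ R := le_trans ht.2.le haR
      have h1 : t ^ (s - 1) ≤ R ^ (s - 1) :=
        Real.rpow_le_rpow ht0 htR (by linarith)
      have h2 : (0:ℝ) ≤ t ^ (s - 1) := Real.rpow_nonneg ht0 _
      rw [Real.norm_eq_abs, abs_of_nonneg (by positivity)]
      exact mul_le_mul_of_nonneg_left h1 (by linarith)
    have := norm_image_sub_le_of_norm_deriv_le_segment' hderiv hbound a
      (Set.right_mem_Icc.2 hba)
    have hxy : x ^ s = x ^ s := rfl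
    calc a ^ s - b ^ s ≤ |a ^ s - b ^ s| := le_abs_self _
      _ = ‖(fun u : ℝ => u ^ s) a - (fun u : ℝ => u ^ s) b‖ := by simp [Real.norm_eq_abs]
      _ ≤ s * R ^ (s - 1) * (a - b) := this
  rcases le_total y x with h | h
  · rw [abs_of_nonneg (sub_nonneg.2 (Real.rpow_le_rpow hy0 h (by linarith))),
      abs_of_nonneg (sub_nonneg.2 h)]
    exact key x y hy0 h hxR
  · rw [abs_of_nonpos (sub_nonpos.2 (Real.rpow_le_rpow hx0 h (by linarith))),
      abs_of_nonpos (sub_nonpos.2 h), neg_sub, neg_sub]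
    exact key y x hx0 h hyR

theorem kernel_discrepancy_bound (d : ℕ) (hd : 1 ≤ d) (p R : ℝ) (hp : 2 < p) (hR : 0 < R)
    (q cp : ℝ) (hq : q = min (p - 2) 1)
    (hcp : cp = if p ≤ 3 then 1 else (p - 2) * R ^ (p - 3)) :
    ∀ v w a b : EuclideanSpace ℝ (Fin d), ‖w - v‖ ≤ R → ‖b - a‖ ≤ R →
      |‖w - v‖ ^ (p - 2) - ‖b - a‖ ^ (p - 2)| ≤ cp * (‖v - a‖ ^ q + ‖w - b‖ ^ q) := by
  intro v w a b hwv hba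
  set A := ‖w - v‖ with hA
  set B := ‖b - a‖ with hB
  set X := ‖v - a‖ with hX
  set Y := ‖w - b‖ with hY
  have hA0 : 0 ≤ A := norm_nonneg _
  have hB0 : 0 ≤ B := norm_nonneg _
  have hX0 : 0 ≤ X := norm_nonneg _
  have hY0 : 0 ≤ Y := norm_nonneg _
  have htri : |A - B| ≤ X + Y := by
    have h1 : |A - B| ≤ ‖(w - v) - (b - a)‖ := abs_norm_sub_norm_le _ _
    have h2 : (w - v) - (b - a) = (w - b) - (v - a) := by abel
    have h3 : ‖(w - b) - (v - a)‖ ≤ Y + X := norm_sub_le _ _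
    rw [h2] at h1
    linarith
  by_cases hp3 : p ≤ 3
  · -- q = p - 2 ≤ 1, cp = 1
    have hq' : q = p - 2 := by rw [hq, min_eq_left (by linarith)]
    have hcp' : cp = 1 := by rw [hcp, if_pos hp3]
    have hq0 : 0 ≤ p - 2 := by linarith
    have hq1 : p - 2 ≤ 1 := by linarith
    have h1 : |A ^ (p - 2) - B ^ (p - 2)| ≤ |A - B| ^ (p - 2) :=
      abs_rpow_sub_rpow hq0 hq1 hA0 hB0
    have h2 : |A - B| ^ (p - 2) ≤ (X + Y) ^ (p - 2) :=
      Real.rpow_le_rpow (abs_nonneg _) htri hq0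
    have h3 : (X + Y) ^ (p - 2) ≤ X ^ (p - 2) + Y ^ (p - 2) :=
      rpow_subadd hq0 hq1 hX0 hY0
    rw [hq', hcp', one_mul]
    linarith
  · -- q = 1, cp = (p-2) * R^(p-3)
    push_neg at hp3
    have hq' : q = 1 := by rw [hq, min_eq_right (by linarith)]
    have hcp' : cp = (p - 2) * R ^ (p - 3) := by rw [hcp, if_neg (not_le.2 hp3)]
    have hs : 1 < p - 2 := by linarith
    have h1 : |A ^ (p - 2) - B ^ (p - 2)| ≤ (p - 2) * R ^ (p - 2 - 1) * |A - B| :=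
      rpow_sub_rpow_mvt hs hR hA0 hwv hB0 hba
    have hcoef : (0:ℝ) ≤ (p - 2) * R ^ (p - 2 - 1) := by positivity
    have h2 : (p - 2) * R ^ (p - 2 - 1) * |A - B| ≤ (p - 2) * R ^ (p - 2 - 1) * (X + Y) :=
      mul_le_mul_of_nonneg_left htri hcoef
    have hpow : p - 2 - 1 = p - 3 := by ring
    rw [hq', hcp', Real.rpow_one, Real.rpow_one]
    rw [hpow] at h1 h2
    linarith
end

section
/- Let d ≥ 1 and p ≥ 2, V > 0, L_φ ≥ 0, L_u ≥ 0, K ≥ 0 be real numbers. Let φ : ℝ^d → ℝ be nonnegative with φ(x) ≤ K for all x and Lipschitz with constant L_φ; let u : ℝ^d → ℝ^d be Lipschitz with constant L_u and satisfy ‖u(y) − u(x)‖ ≤ V for all x, y; let ρ : ℝ^d → ℝ be nonnegative, integrable, with ∫ ρ(y) dy = 1. Define A(x) = ∫ φ(x − y) ‖u(y) − u(x)‖^(p−2) (u(y) − u(x)) ρ(y) dy ∈ ℝ^d. Then A is Lipschitz with constant L_φ V^(p−1) + K (p−1) V^(p−2) L_u. -/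
lemma scalar_rpow_lemma {q t s M : ℝ} (hq : 0 ≤ q) (ht : 0 ≤ t) (hts : t ≤ s) (hsM : s ≤ M) :
    t * (s ^ q - t ^ q) ≤ q * M ^ q * (s - t) := by
  have hs : 0 ≤ s := ht.trans hts
  have hM : 0 ≤ M := hs.trans hsM
  rcases eq_or_lt_of_le ht with rfl | ht
  · simp only [zero_mul, sub_zero]
    exact mul_nonneg (mul_nonneg hq (Real.rpow_nonneg hM q)) (by linarith)
  have hs' : 0 < s := lt_of_lt_of_le ht hts
  have htM : t ≤ M := hts.trans hsM
  have hMq : t ^ q ≤ M ^ q := Real.rpow_le_rpow ht.le htM hq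
  have hsq : s ^ q ≤ M ^ q := Real.rpow_le_rpow hs hsM hq
  rcases le_or_gt q 1 with hq1 | hq1
  · -- concave case: s^q ≤ t^q + q * t^(q-1) * (s-t)
    have h1 : (s / t) ^ q ≤ 1 + q * (s / t - 1) := by
      have hst : (-1 : ℝ) ≤ s / t - 1 := by
        have : 0 ≤ s / t := div_nonneg hs ht.le
        linarith
      have := rpow_one_add_le_one_add_mul_self hst hq hq1
      simpa using this
    have h2 : s ^ q ≤ (1 + q * (s / t - 1)) * t ^ q := by
      have hdiv : (s / t) ^ q = s ^ q / t ^ q := Real.div_rpow hs ht.le q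
      rw [hdiv, div_le_iff₀ (Real.rpow_pos_of_pos ht q)] at h1
      exact h1
    have h3 : t * (s ^ q - t ^ q) ≤ q * t ^ q * (s - t) := by
      have ht0 : (t : ℝ) ≠ 0 := ne_of_gt ht
      have : t * ((1 + q * (s / t - 1)) * t ^ q - t ^ q) = q * t ^ q * (s - t) := by
        field_simp
        ring
      nlinarith [Real.rpow_pos_of_pos ht q, mul_le_mul_of_nonneg_left h2 ht.le]
    refine h3.trans ?_
    exact mul_le_mul_of_nonneg_right (mul_le_mul_of_nonneg_left hMq hq) (by linarith)
  · -- convex case: s^q - t^q ≤ q * s^(q-1) * (s-t)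
    have h1 : 1 + q * (t / s - 1) ≤ (t / s) ^ q := by
      have hst : (-1 : ℝ) ≤ t / s - 1 := by
        have : 0 ≤ t / s := div_nonneg ht.le hs
        linarith
      have := one_add_mul_self_le_rpow_one_add hst hq1.le
      simpa using this
    have h2 : (1 + q * (t / s - 1)) * s ^ q ≤ t ^ q := by
      have hdiv : (t / s) ^ q = t ^ q / s ^ q := Real.div_rpow ht.le hs q
      rw [hdiv, le_div_iff₀ (Real.rpow_pos_of_pos hs' q)] at h1
      exact h1
    have h3 : s * (s ^ q - t ^ q) ≤ q * s ^ q * (s - t) := by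
      have hs0 : (s : ℝ) ≠ 0 := ne_of_gt hs'
      have heq : s * (s ^ q - (1 + q * (t / s - 1)) * s ^ q) = q * s ^ q * (s - t) := by
        field_simp
        ring
      nlinarith
    have h4 : t * (s ^ q - t ^ q) ≤ s * (s ^ q - t ^ q) := by
      have : 0 ≤ s ^ q - t ^ q := by
        have := Real.rpow_le_rpow ht.le hts hq
        linarith
      nlinarith
    refine (h4.trans h3).trans ?_
    exact mul_le_mul_of_nonneg_right (mul_le_mul_of_nonneg_left hsq hq) (by linarith)


lemma phi_diff_aux {E : Type*} [NormedAddCommGroup E] [NormedSpace ℝ E]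
    {q M : ℝ} (hq : 0 ≤ q) {a b : E} (ha : ‖a‖ ≤ M) (hb : ‖b‖ ≤ M) (hba : ‖b‖ ≤ ‖a‖) :
    ‖(‖a‖ ^ q) • a - (‖b‖ ^ q) • b‖ ≤ (q + 1) * M ^ q * ‖a - b‖ := by
  have hM : 0 ≤ M := (norm_nonneg a).trans ha
  have hsplit : (‖a‖ ^ q) • a - (‖b‖ ^ q) • b
      = (‖a‖ ^ q) • (a - b) + (‖a‖ ^ q - ‖b‖ ^ q) • b := by
    rw [smul_sub, sub_smul]; abel
  rw [hsplit]
  have h1 : ‖(‖a‖ ^ q) • (a - b)‖ ≤ M ^ q * ‖a - b‖ := by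
    rw [norm_smul, Real.norm_eq_abs, abs_of_nonneg (Real.rpow_nonneg (norm_nonneg a) q)]
    exact mul_le_mul_of_nonneg_right (Real.rpow_le_rpow (norm_nonneg a) ha hq) (norm_nonneg _)
  have h2 : ‖(‖a‖ ^ q - ‖b‖ ^ q) • b‖ ≤ q * M ^ q * ‖a - b‖ := by
    rw [norm_smul, Real.norm_eq_abs]
    have hqq : 0 ≤ ‖a‖ ^ q - ‖b‖ ^ q := by
      have := Real.rpow_le_rpow (norm_nonneg b) hba hq; linarith
    rw [abs_of_nonneg hqq]
    have key : ‖b‖ * (‖a‖ ^ q - ‖b‖ ^ q) ≤ q * M ^ q * (‖a‖ - ‖b‖) :=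
      scalar_rpow_lemma hq (norm_nonneg b) hba ha
    have hnn : ‖a‖ - ‖b‖ ≤ ‖a - b‖ := by
      have := norm_sub_norm_le a b; linarith
    calc (‖a‖ ^ q - ‖b‖ ^ q) * ‖b‖ = ‖b‖ * (‖a‖ ^ q - ‖b‖ ^ q) := by ring
      _ ≤ q * M ^ q * (‖a‖ - ‖b‖) := key
      _ ≤ q * M ^ q * ‖a - b‖ := by
          have : 0 ≤ q * M ^ q := mul_nonneg hq (Real.rpow_nonneg hM q)
          exact mul_le_mul_of_nonneg_left hnn this
  calc ‖(‖a‖ ^ q) • (a - b) + (‖a‖ ^ q - ‖b‖ ^ q) • b‖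
      ≤ ‖(‖a‖ ^ q) • (a - b)‖ + ‖(‖a‖ ^ q - ‖b‖ ^ q) • b‖ := norm_add_le _ _
    _ ≤ M ^ q * ‖a - b‖ + q * M ^ q * ‖a - b‖ := add_le_add h1 h2
    _ = (q + 1) * M ^ q * ‖a - b‖ := by ring

lemma phi_diff {E : Type*} [NormedAddCommGroup E] [NormedSpace ℝ E]
    {q M : ℝ} (hq : 0 ≤ q) {a b : E} (ha : ‖a‖ ≤ M) (hb : ‖b‖ ≤ M) :
    ‖(‖a‖ ^ q) • a - (‖b‖ ^ q) • b‖ ≤ (q + 1) * M ^ q * ‖a - b‖ := by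
  rcases le_total ‖b‖ ‖a‖ with h | h
  · exact phi_diff_aux hq ha hb h
  · rw [norm_sub_rev, norm_sub_rev a b]
    exact phi_diff_aux hq hb ha h


open MeasureTheory

theorem alignment_force_lipschitz (d : ℕ) (hd : 1 ≤ d)
    (p V Lφ Lu K : ℝ) (hp : 2 ≤ p) (hV : 0 < V) (hLφ : 0 ≤ Lφ) (hLu : 0 ≤ Lu) (hK : 0 ≤ K)
    (φ : EuclideanSpace ℝ (Fin d) → ℝ)
    (hφ0 : ∀ x, 0 ≤ φ x) (hφK : ∀ x, φ x ≤ K)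
    (hφLip : ∀ x y, |φ x - φ y| ≤ Lφ * ‖x - y‖)
    (u : EuclideanSpace ℝ (Fin d) → EuclideanSpace ℝ (Fin d))
    (huLip : ∀ x y, ‖u x - u y‖ ≤ Lu * ‖x - y‖)
    (huV : ∀ x y, ‖u y - u x‖ ≤ V)
    (ρ : EuclideanSpace ℝ (Fin d) → ℝ)
    (hρ0 : ∀ y, 0 ≤ ρ y) (hρint : Integrable ρ) (hρ1 : (∫ y, ρ y) = 1)
    (A : EuclideanSpace ℝ (Fin d) → EuclideanSpace ℝ (Fin d))
    (hA : ∀ x, A x = ∫ y, (φ (x - y) * ‖u y - u x‖ ^ (p - 2) * ρ y) • (u y - u x)) :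
    ∀ x₁ x₂, ‖A x₁ - A x₂‖ ≤ (Lφ * V ^ (p - 1) + K * (p - 1) * V ^ (p - 2) * Lu) * ‖x₁ - x₂‖ := by
  have hq : (0:ℝ) ≤ p - 2 := by linarith
  -- continuity of φ and u
  have hcφ : Continuous φ := by
    have : LipschitzWith (Real.toNNReal Lφ) φ := by
      apply LipschitzWith.of_dist_le_mul
      intro x y
      rw [Real.dist_eq, dist_eq_norm, Real.coe_toNNReal Lφ hLφ]
      exact hφLip x y
    exact this.continuous
  have hcu : Continuous u := by
    have : LipschitzWith (Real.toNNReal Lu) u := by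
      apply LipschitzWith.of_dist_le_mul
      intro x y
      rw [dist_eq_norm, dist_eq_norm, Real.coe_toNNReal Lu hLu]
      exact huLip x y
    exact this.continuous
  -- integrability of the integrand for each x
  have hint : ∀ x, Integrable
      (fun y => (φ (x - y) * ‖u y - u x‖ ^ (p - 2) * ρ y) • (u y - u x)) := by
    intro x
    have hmeas : AEStronglyMeasurable
        (fun y => (φ (x - y) * ‖u y - u x‖ ^ (p - 2) * ρ y) • (u y - u x))
        (volume : Measure (EuclideanSpace ℝ (Fin d))) := by
      refine AEStronglyMeasurable.smul (f := fun y => φ (x - y) * ‖u y - u x‖ ^ (p - 2) * ρ y)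
        (g := fun y => u y - u x) ?_ ?_
      · apply AEStronglyMeasurable.mul _ hρint.aestronglyMeasurable
        apply AEStronglyMeasurable.mul
        · exact (hcφ.comp (continuous_const.sub continuous_id)).aestronglyMeasurable
        · exact (((hcu.sub continuous_const).norm).rpow_const
            (fun y => Or.inr hq)).aestronglyMeasurable
      · exact (hcu.sub continuous_const).aestronglyMeasurable
    apply Integrable.mono' (hρint.const_mul (K * V ^ (p - 2) * V)) hmeas
    filter_upwards with y
    rw [norm_smul, Real.norm_eq_abs,
      abs_of_nonneg (mul_nonneg (mul_nonneg (hφ0 _)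
        (Real.rpow_nonneg (norm_nonneg _) _)) (hρ0 y))]
    have h2 : φ (x - y) * ‖u y - u x‖ ^ (p - 2) * ‖u y - u x‖ ≤ K * V ^ (p - 2) * V := by
      have hr : ‖u y - u x‖ ^ (p - 2) ≤ V ^ (p - 2) :=
        Real.rpow_le_rpow (norm_nonneg _) (huV x y) hq
      have hn := huV x y
      have h0 := hφ0 (x - y)
      have hk := hφK (x - y)
      have hrn : (0:ℝ) ≤ ‖u y - u x‖ ^ (p - 2) := Real.rpow_nonneg (norm_nonneg _) _
      have hVq : (0:ℝ) ≤ V ^ (p - 2) := Real.rpow_nonneg hV.le _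
      exact mul_le_mul (mul_le_mul hk hr hrn hK) hn (norm_nonneg _)
        (mul_nonneg hK hVq)
    calc φ (x - y) * ‖u y - u x‖ ^ (p - 2) * ρ y * ‖u y - u x‖
        = (φ (x - y) * ‖u y - u x‖ ^ (p - 2) * ‖u y - u x‖) * ρ y := by ring
      _ ≤ (K * V ^ (p - 2) * V) * ρ y :=
          mul_le_mul_of_nonneg_right h2 (hρ0 y)
  intro x₁ x₂
  set C : ℝ := Lφ * V ^ (p - 1) + K * (p - 1) * V ^ (p - 2) * Lu with hCdef
  have hVp1 : V ^ (p - 1) = V ^ (p - 2) * V := by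
    rw [show p - 1 = (p - 2) + 1 by ring, Real.rpow_add_one hV.ne']
  -- pointwise bound
  have hpt : ∀ y, ‖(φ (x₁ - y) * ‖u y - u x₁‖ ^ (p - 2) * ρ y) • (u y - u x₁)
      - (φ (x₂ - y) * ‖u y - u x₂‖ ^ (p - 2) * ρ y) • (u y - u x₂)‖
      ≤ (C * ‖x₁ - x₂‖) * ρ y := by
    intro y
    set a := u y - u x₁ with ha
    set b := u y - u x₂ with hb
    have hreg : ∀ (x : EuclideanSpace ℝ (Fin d)) (c : EuclideanSpace ℝ (Fin d)),
        (φ (x - y) * ‖c‖ ^ (p - 2) * ρ y) • c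
          = (φ (x - y) * ρ y) • ((‖c‖ ^ (p - 2)) • c) := by
      intro x c
      rw [smul_smul]
      congr 1
      ring
    rw [hreg x₁ a, hreg x₂ b]
    set Φa := (‖a‖ ^ (p - 2)) • a with hΦa
    set Φb := (‖b‖ ^ (p - 2)) • b with hΦb
    have hsplit : (φ (x₁ - y) * ρ y) • Φa - (φ (x₂ - y) * ρ y) • Φb
        = ((φ (x₁ - y) - φ (x₂ - y)) * ρ y) • Φa + (φ (x₂ - y) * ρ y) • (Φa - Φb) := by
      rw [sub_mul, sub_smul, smul_sub]
      abel
    rw [hsplit]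
    have haV : ‖a‖ ≤ V := huV x₁ y
    have hbV : ‖b‖ ≤ V := huV x₂ y
    have hΦaN : ‖Φa‖ ≤ V ^ (p - 1) := by
      rw [hΦa, norm_smul, Real.norm_eq_abs,
        abs_of_nonneg (Real.rpow_nonneg (norm_nonneg _) _), hVp1]
      exact mul_le_mul (Real.rpow_le_rpow (norm_nonneg _) haV hq) haV (norm_nonneg _)
        (Real.rpow_nonneg hV.le _)
    have hab : ‖a - b‖ ≤ Lu * ‖x₁ - x₂‖ := by
      have : a - b = u x₂ - u x₁ := by rw [ha, hb]; abel
      rw [this, norm_sub_rev]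
      have := huLip x₁ x₂
      exact this
    have hΦdiff : ‖Φa - Φb‖ ≤ ((p - 2) + 1) * V ^ (p - 2) * ‖a - b‖ :=
      phi_diff hq haV hbV
    have hφd : |φ (x₁ - y) - φ (x₂ - y)| ≤ Lφ * ‖x₁ - x₂‖ := by
      have := hφLip (x₁ - y) (x₂ - y)
      rwa [sub_sub_sub_cancel_right] at this
    have h1 : ‖((φ (x₁ - y) - φ (x₂ - y)) * ρ y) • Φa‖
        ≤ (Lφ * ‖x₁ - x₂‖ * ρ y) * V ^ (p - 1) := by
      rw [norm_smul, Real.norm_eq_abs, abs_mul, abs_of_nonneg (hρ0 y)]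
      have hVp : (0:ℝ) ≤ V ^ (p - 1) := Real.rpow_nonneg hV.le _
      calc |φ (x₁ - y) - φ (x₂ - y)| * ρ y * ‖Φa‖
          ≤ (Lφ * ‖x₁ - x₂‖) * ρ y * V ^ (p - 1) := by
            apply mul_le_mul (mul_le_mul_of_nonneg_right hφd (hρ0 y)) hΦaN (norm_nonneg _)
            exact mul_nonneg (mul_nonneg hLφ (norm_nonneg _)) (hρ0 y)
        _ = (Lφ * ‖x₁ - x₂‖ * ρ y) * V ^ (p - 1) := by ring
    have h2 : ‖(φ (x₂ - y) * ρ y) • (Φa - Φb)‖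
        ≤ (K * ρ y) * (((p - 2) + 1) * V ^ (p - 2) * (Lu * ‖x₁ - x₂‖)) := by
      rw [norm_smul, Real.norm_eq_abs,
        abs_of_nonneg (mul_nonneg (hφ0 _) (hρ0 y))]
      have hΦd2 : ‖Φa - Φb‖ ≤ ((p - 2) + 1) * V ^ (p - 2) * (Lu * ‖x₁ - x₂‖) := by
        refine hΦdiff.trans ?_
        apply mul_le_mul_of_nonneg_left hab
        exact mul_nonneg (by linarith) (Real.rpow_nonneg hV.le _)
      apply mul_le_mul (mul_le_mul_of_nonneg_right (hφK _) (hρ0 y)) hΦd2 (norm_nonneg _)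
      exact mul_nonneg hK (hρ0 y)
    calc ‖((φ (x₁ - y) - φ (x₂ - y)) * ρ y) • Φa + (φ (x₂ - y) * ρ y) • (Φa - Φb)‖
        ≤ ‖((φ (x₁ - y) - φ (x₂ - y)) * ρ y) • Φa‖ + ‖(φ (x₂ - y) * ρ y) • (Φa - Φb)‖ :=
          norm_add_le _ _
      _ ≤ (Lφ * ‖x₁ - x₂‖ * ρ y) * V ^ (p - 1)
          + (K * ρ y) * (((p - 2) + 1) * V ^ (p - 2) * (Lu * ‖x₁ - x₂‖)) := add_le_add h1 h2
      _ = (C * ‖x₁ - x₂‖) * ρ y := by rw [hCdef]; ring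
  have hAB : A x₁ - A x₂ = ∫ y, ((φ (x₁ - y) * ‖u y - u x₁‖ ^ (p - 2) * ρ y) • (u y - u x₁)
      - (φ (x₂ - y) * ‖u y - u x₂‖ ^ (p - 2) * ρ y) • (u y - u x₂)) := by
    rw [hA, hA, integral_sub (hint x₁) (hint x₂)]
  rw [hAB]
  calc ‖∫ y, ((φ (x₁ - y) * ‖u y - u x₁‖ ^ (p - 2) * ρ y) • (u y - u x₁)
        - (φ (x₂ - y) * ‖u y - u x₂‖ ^ (p - 2) * ρ y) • (u y - u x₂))‖
      ≤ ∫ y, (C * ‖x₁ - x₂‖) * ρ y := by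
        apply norm_integral_le_of_norm_le (hρint.const_mul _)
        exact ae_of_all _ hpt
    _ = (C * ‖x₁ - x₂‖) * ∫ y, ρ y := integral_const_mul _ _
    _ = C * ‖x₁ - x₂‖ := by rw [hρ1, mul_one]
end

section
/- Let d ≥ 1 and p ≥ 2. Let f : ℝ^d × ℝ^d → ℝ be nonnegative and measurable and φ : ℝ^d → ℝ nonnegative and measurable. For x ∈ ℝ^d set ρ(x) = ∫ f(x,v) dv and assume ρ(x) > 0 for all x; define u(x) = (1/ρ(x)) ∫ v f(x,v) dv ∈ ℝ^d. Assume the function (x,v,y,w) ↦ φ(x−y) ‖u(y) − u(x)‖^(p−2) ‖w − v‖² f(x,v) f(y,w) is integrable on ℝ^(4d) and that (x,y) ↦ φ(x−y) ρ(x) ρ(y) ‖u(y) − u(x)‖^p is integrable on ℝ^(2d). Then (1/2) ∫∫∫∫ φ(x−y) ‖u(y) − u(x)‖^(p−2) ‖w − v‖² f(x,v) f(y,w) dx dy dv dw ≥ (1/2) ∫∫ φ(x−y) ρ(x) ρ(y) ‖u(y) − u(x)‖^p dx dy. -/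
open MeasureTheory

section Aux

variable {d : ℕ}

local notation "E" => EuclideanSpace ℝ (Fin d)

/-- If a weighted second moment is finite (with a positive-mass second weight),
then the first moment of `f₁` is integrable. -/
lemma aux_mom (f₁ f₂ : EuclideanSpace ℝ (Fin d) → ℝ)
    (hm₁ : Measurable f₁)
    (h₁0 : ∀ v, 0 ≤ f₁ v) (h₂0 : ∀ v, 0 ≤ f₂ v)
    (h₁ : Integrable f₁)
    (hr : 0 < ∫ v, f₂ v)
    (hF2 : Integrable (fun vw : E × E => f₁ vw.1 * f₂ vw.2 * ‖vw.2 - vw.1‖ ^ 2)) :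
    Integrable (fun v : E => f₁ v • v) := by
  have hex : ∃ w₀, 0 < f₂ w₀ ∧ Integrable (fun v => f₁ v * f₂ w₀ * ‖w₀ - v‖ ^ 2) := by
    by_contra hcon
    push_neg at hcon
    have h0 : ∀ᵐ w : E, f₂ w = 0 := by
      filter_upwards [hF2.prod_left_ae] with w hw
      by_contra hne
      exact hcon w (lt_of_le_of_ne (h₂0 w) (Ne.symm hne)) hw
    rw [integral_congr_ae h0, integral_zero] at hr
    exact lt_irrefl 0 hr
  obtain ⟨w₀, hk, hw⟩ := hex
  have hsl2 : Integrable (fun v => f₁ v * ‖w₀ - v‖ ^ 2) := by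
    have h := hw.mul_const (f₂ w₀)⁻¹
    refine h.congr (Filter.Eventually.of_forall fun v => ?_)
    field_simp
  have hb : Integrable (fun v : E => f₁ v * ‖v‖) := by
    refine Integrable.mono' (hsl2.add (h₁.const_mul (1 + ‖w₀‖)))
      ((hm₁.mul measurable_norm).aestronglyMeasurable)
      (Filter.Eventually.of_forall fun v => ?_)
    have h1 : ‖v‖ - ‖w₀‖ ≤ ‖w₀ - v‖ := by
      rw [norm_sub_rev]; exact norm_sub_norm_le v w₀
    rw [Real.norm_eq_abs, abs_of_nonneg (mul_nonneg (h₁0 v) (norm_nonneg v))]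
    have h2 : ‖v‖ ≤ ‖w₀ - v‖ ^ 2 + 1 + ‖w₀‖ := by nlinarith [sq_nonneg (‖w₀ - v‖ - 1)]
    simp only [Pi.add_apply]
    nlinarith [mul_le_mul_of_nonneg_left h2 (h₁0 v)]
  refine Integrable.mono' hb (hm₁.smul measurable_id).aestronglyMeasurable
    (Filter.Eventually.of_forall fun v => ?_)
  rw [norm_smul, Real.norm_eq_abs, abs_of_nonneg (h₁0 v)]

set_option maxHeartbeats 1000000 in
/-- Pointwise (in the macroscopic variables) Cauchy–Schwarz second-moment inequality. -/
lemma aux_core (p : ℝ) (hp : 2 ≤ p)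
    (f : E × E → ℝ) (hfm : Measurable f) (hf0 : ∀ q, 0 ≤ f q)
    (φv : ℝ) (hφv : 0 ≤ φv) (x y : E)
    (rx ry : ℝ) (hrx : rx = ∫ v, f (x, v)) (hry : ry = ∫ v, f (y, v))
    (hrx0 : 0 < rx) (hry0 : 0 < ry)
    (a b : E) (ha : a = rx⁻¹ • ∫ v, f (x, v) • v) (hb : b = ry⁻¹ • ∫ v, f (y, v) • v)
    (hsl : Integrable (fun vw : E × E =>
      φv * ‖b - a‖ ^ (p - 2) * ‖vw.2 - vw.1‖ ^ 2 * f (x, vw.1) * f (y, vw.2))) :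
    φv * rx * ry * ‖b - a‖ ^ p ≤
      ∫ vw : E × E, φv * ‖b - a‖ ^ (p - 2) * ‖vw.2 - vw.1‖ ^ 2 * f (x, vw.1) * f (y, vw.2) := by
  have hfx : Integrable (fun v => f (x, v)) := by
    by_contra h
    rw [integral_undef h] at hrx
    exact hrx0.ne' hrx
  have hfy : Integrable (fun v => f (y, v)) := by
    by_contra h
    rw [integral_undef h] at hry
    exact hry0.ne' hry
  set t := ‖b - a‖ with hT
  have ht0 : 0 ≤ t := norm_nonneg _
  have hnn : ∀ vw : E × E,
      0 ≤ φv * t ^ (p - 2) * ‖vw.2 - vw.1‖ ^ 2 * f (x, vw.1) * f (y, vw.2) := fun vw =>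
    mul_nonneg (mul_nonneg (mul_nonneg (mul_nonneg hφv (Real.rpow_nonneg ht0 _))
      (by positivity)) (hf0 _)) (hf0 _)
  have hc0 : 0 ≤ φv * t ^ (p - 2) := mul_nonneg hφv (Real.rpow_nonneg ht0 _)
  by_cases hc : φv * t ^ (p - 2) = 0
  · have hz : φv * rx * ry * t ^ p = 0 := by
      rcases mul_eq_zero.1 hc with h | h
      · rw [h]; ring
      · have ht : t = 0 := by
          by_contra hne
          exact (Real.rpow_pos_of_pos (ht0.lt_of_ne (Ne.symm hne)) (p - 2)).ne' h
        rw [ht, Real.zero_rpow (by linarith : p ≠ 0)]; ring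
    rw [hz]
    exact integral_nonneg hnn
  have hcpos : 0 < φv * t ^ (p - 2) := hc0.lt_of_ne (Ne.symm hc)
  -- strip the constant: the pure second moment is integrable
  have hF2 : Integrable (fun vw : E × E => f (x, vw.1) * f (y, vw.2) * ‖vw.2 - vw.1‖ ^ 2) := by
    have h := hsl.const_mul (φv * t ^ (p - 2))⁻¹
    refine h.congr (Filter.Eventually.of_forall fun vw => ?_)
    show (φv * t ^ (p - 2))⁻¹ * (φv * t ^ (p - 2) * ‖vw.2 - vw.1‖ ^ 2 * f (x, vw.1) * f (y, vw.2)) = f (x, vw.1) * f (y, vw.2) * ‖vw.2 - vw.1‖ ^ 2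
    rw [show φv * t ^ (p - 2) * ‖vw.2 - vw.1‖ ^ 2 * f (x, vw.1) * f (y, vw.2) = (φv * t ^ (p - 2)) * (f (x, vw.1) * f (y, vw.2) * ‖vw.2 - vw.1‖ ^ 2) by ring, inv_mul_cancel_left₀ hc]
  have hmx : Measurable (fun vw : E × E => f (x, vw.1)) :=
    hfm.comp (measurable_const.prodMk measurable_fst)
  have hmy : Measurable (fun vw : E × E => f (y, vw.2)) :=
    hfm.comp (measurable_const.prodMk measurable_snd)
  have hFint : Integrable (fun vw : E × E => f (x, vw.1) * f (y, vw.2)) := hfx.mul_prod hfy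
  have hI1 : ∫ vw : E × E, f (x, vw.1) * f (y, vw.2) = rx * ry := by
    rw [hrx, hry]
    exact integral_prod_mul (μ := (volume : Measure (EuclideanSpace ℝ (Fin d))))
      (ν := (volume : Measure (EuclideanSpace ℝ (Fin d))))
      (fun v => f (x, v)) (fun w => f (y, w))
  -- first moments are integrable
  have hmomx : Integrable (fun v : E => f (x, v) • v) := by
    refine aux_mom (fun v => f (x, v)) (fun w => f (y, w))
      (hfm.comp measurable_prodMk_left) (fun v => hf0 _) (fun v => hf0 _) hfx ?_ hF2
    rw [← hry]; exact hry0
  have hF2s : Integrable (fun vw : E × E => f (y, vw.1) * f (x, vw.2) * ‖vw.2 - vw.1‖ ^ 2) := by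
    refine hF2.swap.congr (Filter.Eventually.of_forall fun vw => ?_)
    simp only [Function.comp_apply, Prod.fst_swap, Prod.snd_swap]
    rw [norm_sub_rev]
    ring
  have hmomy : Integrable (fun w : E => f (y, w) • w) := by
    refine aux_mom (fun w => f (y, w)) (fun v => f (x, v))
      (hfm.comp measurable_prodMk_left) (fun v => hf0 _) (fun v => hf0 _) hfy ?_ hF2s
    rw [← hrx]; exact hrx0
  have hmomxn : Integrable (fun v : E => f (x, v) * ‖v‖) := by
    refine hmomx.norm.congr (Filter.Eventually.of_forall fun v => ?_)
    show ‖f (x, v) • v‖ = f (x, v) * ‖v‖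
    rw [norm_smul, Real.norm_eq_abs, abs_of_nonneg (hf0 _)]
  have hmomyn : Integrable (fun w : E => f (y, w) * ‖w‖) := by
    refine hmomy.norm.congr (Filter.Eventually.of_forall fun w => ?_)
    show ‖f (y, w) • w‖ = f (y, w) * ‖w‖
    rw [norm_smul, Real.norm_eq_abs, abs_of_nonneg (hf0 _)]
  have hxa : ∫ v, f (x, v) • v = rx • a := by rw [ha, smul_inv_smul₀ hrx0.ne']
  have hyb : ∫ v, f (y, v) • v = ry • b := by rw [hb, smul_inv_smul₀ hry0.ne']
  -- integrability of the vector integrands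
  have hsm2 : Integrable (fun vw : E × E => (f (x, vw.1) * f (y, vw.2)) • vw.2) := by
    refine Integrable.mono' (hfx.mul_prod hmomyn)
      (((hmx.mul hmy).smul measurable_snd).aestronglyMeasurable)
      (Filter.Eventually.of_forall fun vw => le_of_eq ?_)
    rw [norm_smul, Real.norm_eq_abs, abs_of_nonneg (mul_nonneg (hf0 _) (hf0 _)), mul_assoc]
  have hsm1 : Integrable (fun vw : E × E => (f (x, vw.1) * f (y, vw.2)) • vw.1) := by
    refine Integrable.mono' (hmomxn.mul_prod hfy)
      (((hmx.mul hmy).smul measurable_fst).aestronglyMeasurable)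
      (Filter.Eventually.of_forall fun vw => le_of_eq ?_)
    rw [norm_smul, Real.norm_eq_abs, abs_of_nonneg (mul_nonneg (hf0 _) (hf0 _))]
    ring
  -- the key barycenter identity
  have hkey : ∫ vw : E × E, (f (x, vw.1) * f (y, vw.2)) • (vw.2 - vw.1)
      = (rx * ry) • (b - a) := by
    have hsub : (fun vw : E × E => (f (x, vw.1) * f (y, vw.2)) • (vw.2 - vw.1))
        = fun vw : E × E => (f (x, vw.1) * f (y, vw.2)) • vw.2
          - (f (x, vw.1) * f (y, vw.2)) • vw.1 := by
      funext vw; rw [smul_sub]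
    rw [hsub, integral_sub hsm2 hsm1]
    have h2 : ∫ vw : E × E, (f (x, vw.1) * f (y, vw.2)) • vw.2 = rx • (ry • b) := by
      have hii2 : (∫ vw : E × E, (f (x, vw.1) * f (y, vw.2)) • vw.2)
          = ∫ v, ∫ w, (f (x, v) * f (y, w)) • w :=
        (integral_integral (μ := (volume : Measure (EuclideanSpace ℝ (Fin d))))
          (ν := (volume : Measure (EuclideanSpace ℝ (Fin d))))
          (f := fun v w => (f (x, v) * f (y, w)) • w) hsm2).symm
      rw [hii2]
      have hinner : ∀ v : E, ∫ w, (f (x, v) * f (y, w)) • w = f (x, v) • (ry • b) := by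
        intro v
        simp_rw [mul_smul]
        rw [integral_smul, hyb]
      simp_rw [hinner]
      rw [integral_smul_const, ← hrx]
    have h1 : ∫ vw : E × E, (f (x, vw.1) * f (y, vw.2)) • vw.1 = ry • (rx • a) := by
      have hii1 : (∫ vw : E × E, (f (x, vw.1) * f (y, vw.2)) • vw.1)
          = ∫ v, ∫ w, (f (x, v) * f (y, w)) • v :=
        (integral_integral (μ := (volume : Measure (EuclideanSpace ℝ (Fin d))))
          (ν := (volume : Measure (EuclideanSpace ℝ (Fin d))))
          (f := fun v w => (f (x, v) * f (y, w)) • v) hsm1).symm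
      rw [hii1]
      have hinner : ∀ v : E, ∫ w, (f (x, v) * f (y, w)) • v = ry • (f (x, v) • v) := by
        intro v
        simp_rw [mul_comm (f (x, v)), mul_smul]
        rw [integral_smul_const, ← hry]
      simp_rw [hinner]
      rw [integral_smul, hxa]
    rw [h2, h1, smul_sub, smul_smul, smul_smul, mul_comm ry rx]
  -- integrability of F * g
  have hFg : Integrable (fun vw : E × E =>
      (f (x, vw.1) * f (y, vw.2)) * ‖vw.2 - vw.1‖) := by
    refine Integrable.mono' (hF2.add hFint)
      (((hmx.mul hmy).mul (measurable_snd.sub measurable_fst).norm).aestronglyMeasurable)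
      (Filter.Eventually.of_forall fun vw => ?_)
    simp only [Pi.add_apply]
    rw [Real.norm_eq_abs,
      abs_of_nonneg (mul_nonneg (mul_nonneg (hf0 _) (hf0 _)) (norm_nonneg _))]
    nlinarith [sq_nonneg (‖vw.2 - vw.1‖ - 1), mul_nonneg (hf0 (x, vw.1)) (hf0 (y, vw.2)),
      norm_nonneg (vw.2 - vw.1),
      mul_le_mul_of_nonneg_left (by nlinarith [sq_nonneg (‖vw.2 - vw.1‖ - 1)] :
        ‖vw.2 - vw.1‖ ≤ ‖vw.2 - vw.1‖ ^ 2 + 1) (mul_nonneg (hf0 (x, vw.1)) (hf0 (y, vw.2)))]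
  -- the first-moment bound
  have hCle : rx * ry * t ≤ ∫ vw : E × E, (f (x, vw.1) * f (y, vw.2)) * ‖vw.2 - vw.1‖ := by
    calc rx * ry * t = ‖(rx * ry) • (b - a)‖ := by
          rw [norm_smul, Real.norm_eq_abs, abs_of_nonneg (mul_nonneg hrx0.le hry0.le)]
      _ = ‖∫ vw : E × E, (f (x, vw.1) * f (y, vw.2)) • (vw.2 - vw.1)‖ := by rw [hkey]
      _ ≤ ∫ vw : E × E, ‖(f (x, vw.1) * f (y, vw.2)) • (vw.2 - vw.1)‖ :=
          norm_integral_le_integral_norm _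
      _ = ∫ vw : E × E, (f (x, vw.1) * f (y, vw.2)) * ‖vw.2 - vw.1‖ := by
          congr 1; funext vw
          rw [norm_smul, Real.norm_eq_abs, abs_of_nonneg (mul_nonneg (hf0 _) (hf0 _))]
  have hI2nn : 0 ≤ ∫ vw : E × E, f (x, vw.1) * f (y, vw.2) * ‖vw.2 - vw.1‖ ^ 2 :=
    integral_nonneg fun vw => mul_nonneg (mul_nonneg (hf0 _) (hf0 _)) (by positivity)
  by_cases ht : t = 0
  · have hz2 : φv * rx * ry * t ^ p = 0 := by
      rw [ht, Real.zero_rpow (by linarith : p ≠ 0)]; ring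
    rw [hz2]
    exact integral_nonneg hnn
  · have htpos : 0 < t := ht0.lt_of_ne (Ne.symm ht)
    -- AM-GM step
    have hAM : ∫ vw : E × E, (f (x, vw.1) * f (y, vw.2)) * ‖vw.2 - vw.1‖ ≤
        (t * (rx * ry) + t⁻¹ * ∫ vw : E × E, f (x, vw.1) * f (y, vw.2) * ‖vw.2 - vw.1‖ ^ 2) / 2 := by
      have hrhs : Integrable (fun vw : E × E =>
          (t * (f (x, vw.1) * f (y, vw.2)) +
            t⁻¹ * (f (x, vw.1) * f (y, vw.2) * ‖vw.2 - vw.1‖ ^ 2)) / 2) :=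
        ((hFint.const_mul t).add (hF2.const_mul t⁻¹)).div_const 2
      calc ∫ vw : E × E, (f (x, vw.1) * f (y, vw.2)) * ‖vw.2 - vw.1‖
          ≤ ∫ vw : E × E, (t * (f (x, vw.1) * f (y, vw.2)) +
              t⁻¹ * (f (x, vw.1) * f (y, vw.2) * ‖vw.2 - vw.1‖ ^ 2)) / 2 := by
            refine integral_mono hFg hrhs fun vw => ?_
            have hFnn : 0 ≤ f (x, vw.1) * f (y, vw.2) := mul_nonneg (hf0 _) (hf0 _)
            have ht1 : t * t⁻¹ = 1 := mul_inv_cancel₀ ht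
            have hAMg : 2 * t * ‖vw.2 - vw.1‖ ≤ t ^ 2 + ‖vw.2 - vw.1‖ ^ 2 := by
              nlinarith [sq_nonneg (‖vw.2 - vw.1‖ - t)]
            have h3 := mul_le_mul_of_nonneg_left hAMg hFnn
            have h4 := mul_le_mul_of_nonneg_left h3 (inv_nonneg.2 htpos.le)
            calc (f (x, vw.1) * f (y, vw.2)) * ‖vw.2 - vw.1‖
                = t⁻¹ * ((f (x, vw.1) * f (y, vw.2)) * (2 * t * ‖vw.2 - vw.1‖)) / 2 := by
                  field_simp
              _ ≤ t⁻¹ * ((f (x, vw.1) * f (y, vw.2)) * (t ^ 2 + ‖vw.2 - vw.1‖ ^ 2)) / 2 := by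
                  linarith [h4]
              _ = (t * (f (x, vw.1) * f (y, vw.2)) +
                    t⁻¹ * (f (x, vw.1) * f (y, vw.2) * ‖vw.2 - vw.1‖ ^ 2)) / 2 := by
                  field_simp
        _ = (t * (rx * ry) + t⁻¹ * ∫ vw : E × E,
              f (x, vw.1) * f (y, vw.2) * ‖vw.2 - vw.1‖ ^ 2) / 2 := by
            rw [integral_div, integral_add (hFint.const_mul t) (hF2.const_mul t⁻¹),
              integral_const_mul, integral_const_mul, hI1]
    have hkey2 : rx * ry * t ^ 2 ≤ ∫ vw : E × E,
        f (x, vw.1) * f (y, vw.2) * ‖vw.2 - vw.1‖ ^ 2 := by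
      have ht1 : t * t⁻¹ = 1 := mul_inv_cancel₀ ht
      have h5 : rx * ry * t ≤ t⁻¹ * ∫ vw : E × E,
          f (x, vw.1) * f (y, vw.2) * ‖vw.2 - vw.1‖ ^ 2 := by linarith
      have h6 := mul_le_mul_of_nonneg_left h5 htpos.le
      calc rx * ry * t ^ 2 = t * (rx * ry * t) := by ring
        _ ≤ t * (t⁻¹ * ∫ vw : E × E, f (x, vw.1) * f (y, vw.2) * ‖vw.2 - vw.1‖ ^ 2) := h6
        _ = ∫ vw : E × E, f (x, vw.1) * f (y, vw.2) * ‖vw.2 - vw.1‖ ^ 2 := by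
            rw [← mul_assoc, ht1, one_mul]
    -- conclude
    have hfin : φv * rx * ry * t ^ p = (φv * t ^ (p - 2)) * (rx * ry * t ^ 2) := by
      have h7 : (t : ℝ) ^ (2 : ℕ) = t ^ ((2 : ℕ) : ℝ) := (Real.rpow_natCast t 2).symm
      rw [h7]
      rw [show ((2 : ℕ) : ℝ) = (2 : ℝ) by norm_num]
      rw [show t ^ p = t ^ (p - 2) * t ^ (2 : ℝ) by
        rw [← Real.rpow_add htpos]; ring_nf]
      ring
    calc φv * rx * ry * t ^ p = (φv * t ^ (p - 2)) * (rx * ry * t ^ 2) := hfin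
      _ ≤ (φv * t ^ (p - 2)) * ∫ vw : E × E,
            f (x, vw.1) * f (y, vw.2) * ‖vw.2 - vw.1‖ ^ 2 :=
          mul_le_mul_of_nonneg_left hkey2 hc0
      _ = ∫ vw : E × E, φv * t ^ (p - 2) * ‖vw.2 - vw.1‖ ^ 2 * f (x, vw.1) * f (y, vw.2) := by
          rw [← integral_const_mul]
          congr 1; funext vw; ring

set_option maxHeartbeats 1000000 in
lemma aux_top (p : ℝ) (hp : 2 ≤ p)
    (f : E × E → ℝ)
    (hfm : Measurable f) (hf0 : ∀ q, 0 ≤ f q)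
    (φ : E → ℝ) (hφm : Measurable φ) (hφ0 : ∀ x, 0 ≤ φ x)
    (ρ : E → ℝ) (hρ : ∀ x, ρ x = ∫ v, f (x, v))
    (hρ0 : ∀ x, 0 < ρ x)
    (u : E → E)
    (hu : ∀ x, u x = (ρ x)⁻¹ • ∫ v, f (x, v) • v)
    (hint1 : Integrable (fun q : (E × E) × (E × E) =>
      φ (q.1.1 - q.2.1) * ‖u q.2.1 - u q.1.1‖ ^ (p - 2) * ‖q.2.2 - q.1.2‖ ^ 2 *
        f q.1 * f q.2))
    (hint2 : Integrable (fun xy : E × E =>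
      φ (xy.1 - xy.2) * ρ xy.1 * ρ xy.2 * ‖u xy.2 - u xy.1‖ ^ p)) :
    (∫ x, ∫ y, φ (x - y) * ρ x * ρ y * ‖u y - u x‖ ^ p) ≤
      ∫ x, ∫ y, ∫ v, ∫ w,
        φ (x - y) * ‖u y - u x‖ ^ (p - 2) * ‖w - v‖ ^ 2 * f (x, v) * f (y, w) := by
  -- the rearranged integrand
  set G2 : (E × E) × (E × E) → ℝ := fun z =>
    φ (z.1.1 - z.1.2) * ‖u z.1.2 - u z.1.1‖ ^ (p - 2) * ‖z.2.2 - z.2.1‖ ^ 2 *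
      f (z.1.1, z.2.1) * f (z.1.2, z.2.2) with hG2def
  haveI sf2 : SigmaFinite (volume : Measure (E × E)) :=
    inferInstanceAs (SigmaFinite ((volume : Measure E).prod (volume : Measure E)))
  haveI sf3 : SigmaFinite (volume : Measure ((E : Type) × (E × E))) :=
    inferInstanceAs (SigmaFinite ((volume : Measure E).prod (volume : Measure (E × E))))
  haveI sf3' : SigmaFinite (volume : Measure ((E × E) × E)) :=
    inferInstanceAs (SigmaFinite ((volume : Measure (E × E)).prod (volume : Measure E)))
  haveI sf4 : SigmaFinite (volume : Measure ((E × E) × (E × E))) :=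
    inferInstanceAs (SigmaFinite ((volume : Measure (E × E)).prod (volume : Measure (E × E))))
  haveI sf5 : SigmaFinite (volume : Measure ((E : Type) × (E × (E × E)))) :=
    inferInstanceAs (SigmaFinite ((volume : Measure E).prod (volume : Measure ((E : Type) × (E × E)))))
  -- the measurable equivalence ((x,v),(y,w)) ↦ ((x,y),(v,w))
  let i : ((E × E) × E) ≃ᵐ ((E × E) × E) :=
    MeasurableEquiv.prodComm.prodCongr (MeasurableEquiv.refl (E : Type))
  let j : ((E : Type) × (E × E)) ≃ᵐ ((E : Type) × (E × E)) :=
    MeasurableEquiv.prodAssoc.symm.trans (i.trans MeasurableEquiv.prodAssoc)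
  let k : ((E : Type) × (E × (E × E))) ≃ᵐ ((E : Type) × (E × (E × E))) :=
    (MeasurableEquiv.refl (E : Type)).prodCongr j
  let e : ((E × E) × (E × E)) ≃ᵐ ((E × E) × (E × E)) :=
    MeasurableEquiv.prodAssoc.trans (k.trans MeasurableEquiv.prodAssoc.symm)
  have hmp : MeasurePreserving (⇑e) volume volume := by
    have ha1 : MeasurePreserving (⇑(MeasurableEquiv.prodAssoc :
        ((E × E) × (E × E)) ≃ᵐ (E : Type) × (E × (E × E)))) volume volume :=
      volume_preserving_prodAssoc
    have ha2 : MeasurePreserving (⇑((MeasurableEquiv.prodAssoc :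
        ((E × E) × (E × E)) ≃ᵐ (E : Type) × (E × (E × E))).symm)) volume volume :=
      MeasurePreserving.symm _ volume_preserving_prodAssoc
    have hb1 : MeasurePreserving (⇑((MeasurableEquiv.prodAssoc :
        ((E × E) × E) ≃ᵐ (E : Type) × (E × E)).symm)) volume volume :=
      MeasurePreserving.symm _ volume_preserving_prodAssoc
    have hb2 : MeasurePreserving (⇑(MeasurableEquiv.prodAssoc :
        ((E × E) × E) ≃ᵐ (E : Type) × (E × E))) volume volume :=
      volume_preserving_prodAssoc
    have hswap : MeasurePreserving (⇑i) volume volume := by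
      have := (Measure.measurePreserving_swap (μ := (volume : Measure E))
        (ν := (volume : Measure E))).prod
        (MeasurePreserving.id (volume : Measure E))
      exact this
    have hj : MeasurePreserving (⇑j) volume volume := (hb2.comp hswap).comp hb1
    have hk : MeasurePreserving (⇑k) volume volume := by
      have := (MeasurePreserving.id (volume : Measure E)).prod hj
      exact this
    exact (ha2.comp hk).comp ha1
  have hG1 : Integrable (G2 ∘ ⇑e) volume := by
    refine hint1.congr (Filter.Eventually.of_forall fun q => rfl)
  have hG2i : Integrable G2 (volume : Measure ((E × E) × (E × E))) :=
    (hmp.integrable_comp_emb e.measurableEmbedding).1 hG1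
  have hG2i' : Integrable G2 (((volume : Measure (E × E))).prod (volume : Measure (E × E))) :=
    hG2i
  have hslice : ∀ᵐ z : E × E, Integrable (fun vw : E × E => G2 (z, vw)) volume :=
    hG2i'.prod_right_ae
  have hH : Integrable (fun z : E × E => ∫ vw : E × E, G2 (z, vw))
      (volume : Measure (E × E)) := hG2i'.integral_prod_left
  have hint2' : Integrable (Function.uncurry fun x y : E =>
      φ (x - y) * ρ x * ρ y * ‖u y - u x‖ ^ p)
      ((volume : Measure E).prod (volume : Measure E)) := hint2
  have hint2'' : Integrable (fun z : E × E =>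
      φ (z.1 - z.2) * ρ z.1 * ρ z.2 * ‖u z.2 - u z.1‖ ^ p)
      ((volume : Measure E).prod (volume : Measure E)) := hint2
  have hH' : Integrable (fun z : E × E => ∫ vw : E × E, G2 (z, vw))
      ((volume : Measure E).prod (volume : Measure E)) := hH
  have hHu : Integrable (Function.uncurry fun x y : E => ∫ vw : E × E, G2 ((x, y), vw))
      ((volume : Measure E).prod (volume : Measure E)) := hH
  have hslice2 : ∀ᵐ z : E × E ∂((volume : Measure E).prod (volume : Measure E)),
      Integrable (fun vw : E × E => G2 (z, vw)) volume := hslice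
  have hmono : (∫ z : E × E, φ (z.1 - z.2) * ρ z.1 * ρ z.2 * ‖u z.2 - u z.1‖ ^ p
        ∂((volume : Measure E).prod (volume : Measure E)))
      ≤ ∫ z : E × E, (∫ vw : E × E, G2 (z, vw))
        ∂((volume : Measure E).prod (volume : Measure E)) := by
    refine integral_mono_ae hint2'' hH' ?_
    filter_upwards [hslice2] with z hz
    exact aux_core p hp f hfm hf0 (φ (z.1 - z.2)) (hφ0 _) z.1 z.2 (ρ z.1) (ρ z.2)
      (hρ _) (hρ _) (hρ0 _) (hρ0 _) (u z.1) (u z.2) (hu _) (hu _) hz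
  calc (∫ x, ∫ y, φ (x - y) * ρ x * ρ y * ‖u y - u x‖ ^ p)
      = ∫ z : E × E, φ (z.1 - z.2) * ρ z.1 * ρ z.2 * ‖u z.2 - u z.1‖ ^ p
          ∂((volume : Measure E).prod (volume : Measure E)) :=
        integral_integral (f := fun x y : E => φ (x - y) * ρ x * ρ y * ‖u y - u x‖ ^ p) hint2'
    _ ≤ ∫ z : E × E, (∫ vw : E × E, G2 (z, vw))
          ∂((volume : Measure E).prod (volume : Measure E)) := hmono
    _ = ∫ x, ∫ y, ∫ vw : E × E, G2 ((x, y), vw) :=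
        (integral_integral (f := fun x y : E => ∫ vw : E × E, G2 ((x, y), vw)) hHu).symm
    _ = ∫ x, ∫ y, ∫ v, ∫ w,
          φ (x - y) * ‖u y - u x‖ ^ (p - 2) * ‖w - v‖ ^ 2 * f (x, v) * f (y, w) := by
        refine integral_congr_ae ?_
        filter_upwards [Measure.ae_ae_of_ae_prod hslice2] with x hx
        refine integral_congr_ae ?_
        filter_upwards [hx] with y hy
        exact (integral_integral (f := fun v w : E => G2 ((x, y), (v, w))) hy).symm

end Aux

theorem macroscopic_enstrophy_le (d : ℕ) (hd : 1 ≤ d) (p : ℝ) (hp : 2 ≤ p)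
    (f : EuclideanSpace ℝ (Fin d) × EuclideanSpace ℝ (Fin d) → ℝ)
    (hfm : Measurable f) (hf0 : ∀ q, 0 ≤ f q)
    (φ : EuclideanSpace ℝ (Fin d) → ℝ) (hφm : Measurable φ) (hφ0 : ∀ x, 0 ≤ φ x)
    (ρ : EuclideanSpace ℝ (Fin d) → ℝ) (hρ : ∀ x, ρ x = ∫ v, f (x, v))
    (hρ0 : ∀ x, 0 < ρ x)
    (u : EuclideanSpace ℝ (Fin d) → EuclideanSpace ℝ (Fin d))
    (hu : ∀ x, u x = (ρ x)⁻¹ • ∫ v, f (x, v) • v)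
    (hint1 : Integrable (fun q : (EuclideanSpace ℝ (Fin d) × EuclideanSpace ℝ (Fin d)) ×
        (EuclideanSpace ℝ (Fin d) × EuclideanSpace ℝ (Fin d)) =>
      φ (q.1.1 - q.2.1) * ‖u q.2.1 - u q.1.1‖ ^ (p - 2) * ‖q.2.2 - q.1.2‖ ^ 2 *
        f q.1 * f q.2))
    (hint2 : Integrable (fun xy : EuclideanSpace ℝ (Fin d) × EuclideanSpace ℝ (Fin d) =>
      φ (xy.1 - xy.2) * ρ xy.1 * ρ xy.2 * ‖u xy.2 - u xy.1‖ ^ p)) :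
    (1 / 2) * ∫ x, ∫ y, φ (x - y) * ρ x * ρ y * ‖u y - u x‖ ^ p ≤
      (1 / 2) * ∫ x, ∫ y, ∫ v, ∫ w,
        φ (x - y) * ‖u y - u x‖ ^ (p - 2) * ‖w - v‖ ^ 2 * f (x, v) * f (y, w) := by
  have h12 : (0:ℝ) ≤ 1 / 2 := by norm_num
  exact mul_le_mul_of_nonneg_left
    (aux_top p hp f hfm hf0 φ hφm hφ0 ρ hρ hρ0 u hu hint1 hint2) h12
end
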